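/- arXiv:2004.04397 — 5 statements merged into one kernel-verified Lean document; each statement's English description precedes it below -/
import Mathlib

section
/- In the one-period binomial model, the bid price under the mean semi-deviation of order 1 at level β equals the expectation of S_{Δt} under the tilted probability p̃ = p(1 − β(1−p)): that is, −SD_{1,β}(−S_{Δt}) = p̃·S₀e^{σ√Δt} + (1−p̃)·S₀e^{−σ√Δt}. -/
open MeasureTheory

/-- The mean semi-deviation of order 1: `SD_{1,β}(Y) = E[Y] + β E[(Y − E[Y])₊]`. -/
noncomputable def meanSemiDeviation1 {Ω : Type*} [MeasurableSpace Ω] (μ : Measure Ω)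
    (β : ℝ) (Y : Ω → ℝ) : ℝ :=
  ∫ ω, Y ω ∂μ + β * ∫ ω, max (Y ω - ∫ ω, Y ω ∂μ) 0 ∂μ

/-- In the one-period binomial model, the bid price under the order-1 mean semi-deviation
at level `β` equals the expectation of `S_{Δt}` under the tilted probability
`p̃ = p(1 − β(1 − p))`. -/
theorem stmt_8 {Ω : Type*} [MeasurableSpace Ω] (P : Measure Ω) [IsProbabilityMeasure P]
    (S₀ σ Δt β p : ℝ) (hS₀ : 0 < S₀) (hσ : 0 < σ) (hΔt : 0 < Δt)
    (hβ : β ∈ Set.Icc (0 : ℝ) 1) (hp : p ∈ Set.Ioo (0 : ℝ) 1)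
    (S : Ω → ℝ) (hS : Measurable S)
    (hup : P {ω | S ω = S₀ * Real.exp (σ * Real.sqrt Δt)} = ENNReal.ofReal p)
    (hvals : ∀ ω, S ω = S₀ * Real.exp (σ * Real.sqrt Δt) ∨
      S ω = S₀ * Real.exp (-(σ * Real.sqrt Δt))) :
    -(meanSemiDeviation1 P β (fun ω => -S ω)) =
      (p * (1 - β * (1 - p))) * (S₀ * Real.exp (σ * Real.sqrt Δt)) +
        (1 - p * (1 - β * (1 - p))) * (S₀ * Real.exp (-(σ * Real.sqrt Δt))) := by
  obtain ⟨hp0, hp1⟩ := hp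
  set u := S₀ * Real.exp (σ * Real.sqrt Δt) with hu
  set d := S₀ * Real.exp (-(σ * Real.sqrt Δt)) with hd
  have hx : 0 < σ * Real.sqrt Δt := mul_pos hσ (Real.sqrt_pos.mpr hΔt)
  have hdu : d < u := by
    apply mul_lt_mul_of_pos_left _ hS₀
    exact Real.exp_lt_exp.mpr (by linarith)
  set A := {ω | S ω = u} with hAdef
  have hA : MeasurableSet A := hS (measurableSet_singleton u)
  have hPA : P A = ENNReal.ofReal p := hup
  have hPAc : P Aᶜ = ENNReal.ofReal (1 - p) := by
    rw [measure_compl hA (measure_ne_top _ _), measure_univ, hPA,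
      ENNReal.ofReal_sub _ hp0.le, ENNReal.ofReal_one]
  -- S as indicator
  have hSeq : ∀ ω, S ω = A.indicator (fun _ => u - d) ω + d := by
    intro ω
    by_cases h : ω ∈ A
    · simp [Set.indicator_of_mem h]; linarith [h.out]
    · rcases hvals ω with h' | h'
      · exact absurd h' h
      · simp [Set.indicator_of_notMem h, h']
  have hIind : Integrable (A.indicator (fun _ => u - d)) P :=
    (integrable_const (u - d)).indicator hA
  have hIS : Integrable S P :=
    (hIind.add (integrable_const d)).congr (Filter.Eventually.of_forall fun ω => (hSeq ω).symm)
  have hES : ∫ ω, S ω ∂P = p * (u - d) + d := by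
    calc ∫ ω, S ω ∂P = ∫ ω, (A.indicator (fun _ => u - d) ω + d) ∂P := by
          exact integral_congr_ae (Filter.Eventually.of_forall hSeq)
      _ = (P A).toReal * (u - d) + d := by
          rw [integral_add hIind (integrable_const d), integral_indicator_const _ hA,
            integral_const, measureReal_def, measureReal_def, measure_univ]
          simp [smul_eq_mul]
      _ = p * (u - d) + d := by
          rw [hPA, ENNReal.toReal_ofReal hp0.le]
  have hEY : ∫ ω, -S ω ∂P = -(p * (u - d) + d) := by
    rw [integral_neg, hES]
  -- the positive part function
  have hgeq : ∀ ω, max (-S ω - ∫ ω, -S ω ∂P) 0 = Aᶜ.indicator (fun _ => p * (u - d)) ω := by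
    intro ω
    rw [hEY]
    by_cases h : ω ∈ A
    · have : S ω = u := h.out
      rw [Set.indicator_of_notMem (by simp [h]), this]
      apply max_eq_right
      nlinarith
    · rcases hvals ω with h' | h'
      · exact absurd h' h
      · rw [Set.indicator_of_mem (by simp [h]), h']
        rw [max_eq_left (by nlinarith)]
        ring
  have hEg : (∫ ω, max (-S ω - ∫ ω, -S ω ∂P) 0 ∂P) = (1 - p) * (p * (u - d)) := by
    calc (∫ ω, max (-S ω - ∫ ω, -S ω ∂P) 0 ∂P)
        = ∫ ω, Aᶜ.indicator (fun _ => p * (u - d)) ω ∂P :=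
          integral_congr_ae (Filter.Eventually.of_forall hgeq)
      _ = (P Aᶜ).toReal * (p * (u - d)) := by
          rw [integral_indicator_const _ hA.compl]; simp [smul_eq_mul, measureReal_def]
      _ = (1 - p) * (p * (u - d)) := by
          rw [hPAc, ENNReal.toReal_ofReal (by linarith)]
  simp only [meanSemiDeviation1]
  rw [hEg, hEY]
  ring
end

section
/- With p = (e^{rΔt} − e^{−σ√Δt})/(e^{σ√Δt} − e^{−σ√Δt}), the risk-adjusted probability p̃ = p(1 − β√Δt (1 − p)) satisfies p̃ = 1/2 + ((r − βσ/2)/(2σ) − σ/4)√Δt + o(Δt) as Δt ↓ 0. -/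
open Filter Real Topology

private lemma tendsto_lin (c1 c2 : ℝ) :
    Tendsto (fun s : ℝ => c1 + c2 * s) (𝓝[>] (0:ℝ)) (𝓝 c1) := by
  have : Tendsto (fun s : ℝ => c1 + c2 * s) (𝓝 (0:ℝ)) (𝓝 (c1 + c2 * 0)) :=
    (continuous_const.add (continuous_const.mul continuous_id)).tendsto 0
  simpa using this.mono_left nhdsWithin_le_nhds

private lemma exp_taylor3 (c : ℝ) :
    Tendsto (fun s : ℝ => (Real.exp (c*s) - (1 + c*s + c^2*s^2/2 + c^3*s^3/6)) / s^3)
      (𝓝[>] (0:ℝ)) (𝓝 0) := by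
  have hlim : Tendsto (fun s : ℝ => |c|^4 * s) (𝓝[>] (0:ℝ)) (𝓝 0) := by
    simpa using tendsto_lin 0 (|c|^4)
  apply squeeze_zero_norm' ?_ hlim
  have hb : (0:ℝ) < 1/(|c|+1) := by positivity
  filter_upwards [Ioo_mem_nhdsGT_of_mem (by constructor <;> [rfl; exact hb] :
      (0:ℝ) ∈ Set.Ico 0 (1/(|c|+1)))] with s hs
  obtain ⟨hs0, hs1⟩ := hs
  have hcs : |c*s| ≤ 1 := by
    rw [abs_mul, abs_of_pos hs0]
    rw [lt_div_iff₀ (by positivity)] at hs1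
    nlinarith [abs_nonneg c]
  have hb4 := Real.exp_bound hcs (by norm_num : 0 < 4)
  have hsum : ∑ m ∈ Finset.range 4, (c*s) ^ m / m.factorial
      = 1 + c*s + c^2*s^2/2 + c^3*s^3/6 := by
    norm_num [Finset.sum_range_succ, Nat.factorial]
    ring
  rw [hsum] at hb4
  norm_num [Nat.factorial] at hb4
  have h2 : |Real.exp (c*s) - (1 + c*s + c^2*s^2/2 + c^3*s^3/6)| ≤ |c|^4 * s^4 := by
    refine hb4.trans ?_
    rw [abs_of_pos hs0, mul_pow]
    nlinarith [pow_nonneg (abs_nonneg c) 4, pow_nonneg hs0.le 4]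
  rw [norm_div, Real.norm_eq_abs, Real.norm_eq_abs, abs_of_pos (by positivity : (0:ℝ) < s^3)]
  rw [div_le_iff₀ (by positivity)]
  calc |Real.exp (c*s) - (1 + c*s + c^2*s^2/2 + c^3*s^3/6)| ≤ |c|^4 * s^4 := h2
  _ = |c|^4 * s * s^3 := by ring

private lemma exp_sq_taylor (r : ℝ) :
    Tendsto (fun s : ℝ => (Real.exp (r*s^2) - (1 + r*s^2)) / s^3)
      (𝓝[>] (0:ℝ)) (𝓝 0) := by
  have hlim : Tendsto (fun s : ℝ => r^2 * s) (𝓝[>] (0:ℝ)) (𝓝 0) := by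
    simpa using tendsto_lin 0 (r^2)
  apply squeeze_zero_norm' ?_ hlim
  have hb : (0:ℝ) < min 1 (1/(|r|+1)) := by positivity
  filter_upwards [Ioo_mem_nhdsGT_of_mem (by constructor <;> [rfl; exact hb] :
      (0:ℝ) ∈ Set.Ico 0 (min 1 (1/(|r|+1))))] with s hs
  obtain ⟨hs0, hs1⟩ := hs
  have hs1' : s < 1 := lt_of_lt_of_le hs1 (min_le_left _ _)
  have hs2 : s < 1/(|r|+1) := lt_of_lt_of_le hs1 (min_le_right _ _)
  have hrs : |r*s^2| ≤ 1 := by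
    rw [abs_mul, abs_of_pos (by positivity : (0:ℝ) < s^2)]
    rw [lt_div_iff₀ (by positivity)] at hs2
    nlinarith [abs_nonneg r]
  have h2 := Real.abs_exp_sub_one_sub_id_le hrs
  rw [norm_div, Real.norm_eq_abs, Real.norm_eq_abs, abs_of_pos (by positivity : (0:ℝ) < s^3)]
  rw [div_le_iff₀ (by positivity)]
  calc |Real.exp (r*s^2) - (1 + r*s^2)| = |Real.exp (r*s^2) - 1 - r*s^2| := by congr 1; ring
  _ ≤ (r*s^2)^2 := h2
  _ ≤ r^2 * s * s^3 := by nlinarith [sq_nonneg r, sq_nonneg s]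

private lemma M_helper (r σ a s E1 E2 E3 : ℝ) (hσ : σ ≠ 0) (hs : s ≠ 0)
    (ha : a = (r - σ^2/2)/(2*σ)) :
    (E1 - (1/2 + a*s)*E2 - (1/2 - a*s)*E3)/s^3
      = (E1 - (1 + r*s^2))/s^3
        - (1/2 + a*s) * ((E2 - (1 + σ*s + σ^2*s^2/2 + σ^3*s^3/6))/s^3)
        - (1/2 - a*s) * ((E3 - (1 + -σ*s + (-σ)^2*s^2/2 + (-σ)^3*s^3/6))/s^3)
        - (a*σ^3/3)*s := by
  subst ha; field_simp; ring

private lemma quad_helper (a s N D : ℝ) (hs : s ≠ 0) (hD : D ≠ 0) :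
    (N - (1/2 + a*s)*D)/s^3 * (s/D) = (N/D - 1/2 - a*s)/s^2 := by
  field_simp; ring

private lemma lin_helper (a s q : ℝ) (hs : s ≠ 0) :
    ((q - 1/2 - a*s)/s^2) * s + a = (q - 1/2)/s := by
  field_simp; ring

private lemma final_helper (a β s q : ℝ) (hs : s ≠ 0) :
    (q - 1/2 - a*s)/s^2 + β * ((q - 1/2)/s * ((q - 1/2)/s)) * s
      = (q*(1 - β*s*(1-q)) - 1/2 - (a - β/4)*s)/s^2 := by
  field_simp; ring

/-- Asymptotic expansion of the risk-adjusted probability `p̃ = p(1 − β√Δt(1 − p))`: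
`p̃ = 1/2 + ((r − βσ/2)/(2σ) − σ/4)√Δt + o(Δt)` as `Δt ↓ 0`. -/
theorem stmt_10 (r σ β : ℝ) (hσ : 0 < σ) (hβ : 0 ≤ β) :
    Tendsto
      (fun Δt : ℝ =>
        (let p := (Real.exp (r * Δt) - Real.exp (-σ * Real.sqrt Δt)) /
            (Real.exp (σ * Real.sqrt Δt) - Real.exp (-σ * Real.sqrt Δt));
         p * (1 - β * Real.sqrt Δt * (1 - p))
          - 1 / 2 - ((r - β * σ / 2) / (2 * σ) - σ / 4) * Real.sqrt Δt) / Δt)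
      (nhdsWithin 0 (Set.Ioi 0)) (nhds 0) := by
  set l := 𝓝[>] (0:ℝ)
  set a : ℝ := (r - σ^2/2)/(2*σ) with ha
  set c : ℝ := (r - β * σ / 2) / (2 * σ) - σ / 4 with hc
  set P : ℝ → ℝ := fun s => (Real.exp (r * s^2) - Real.exp (-σ * s)) /
      (Real.exp (σ * s) - Real.exp (-σ * s)) with hP
  -- denominator positivity
  have hD : ∀ s : ℝ, 0 < s → 0 < Real.exp (σ * s) - Real.exp (-σ * s) := by
    intro s hs
    have : -σ * s < σ * s := by nlinarith
    simpa [sub_pos] using Real.exp_lt_exp.2 this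
  -- derivative of the denominator at 0
  have hD0 : HasDerivAt (fun s : ℝ => Real.exp (σ * s) - Real.exp (-σ * s)) (2*σ) 0 := by
    have hA := (Real.hasDerivAt_exp (σ*(0:ℝ))).comp 0 ((hasDerivAt_id (0:ℝ)).const_mul σ)
    have hB := (Real.hasDerivAt_exp (-σ*(0:ℝ))).comp 0 ((hasDerivAt_id (0:ℝ)).const_mul (-σ))
    have := hA.sub hB
    simp only [Function.comp, mul_zero, Real.exp_zero, mul_one, neg_mul, neg_zero] at this ⊢
    exact (this.congr_deriv (by ring)).congr_of_eventuallyEq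
      (Filter.Eventually.of_forall fun s => by simp [Function.comp, neg_mul])
  have hDslope : Tendsto (fun s : ℝ => (Real.exp (σ * s) - Real.exp (-σ * s)) / s) l (𝓝 (2*σ)) := by
    rw [hasDerivAt_iff_tendsto_slope] at hD0
    have := hD0.mono_left (nhdsWithin_mono 0 (fun s hs => ne_of_gt hs : Set.Ioi (0:ℝ) ⊆ {0}ᶜ))
    refine this.congr (fun s => ?_)
    simp [slope_fun_def_field]
  have hsD : Tendsto (fun s : ℝ => s / (Real.exp (σ * s) - Real.exp (-σ * s))) l (𝓝 (1/(2*σ))) := by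
    have := hDslope.inv₀ (by positivity)
    simpa [inv_div] using this
  -- key remainder M/s³ → 0
  have hM : Tendsto (fun s : ℝ =>
      (Real.exp (r*s^2) - (1/2 + a*s)*Real.exp (σ*s) - (1/2 - a*s)*Real.exp (-σ*s)) / s^3)
      l (𝓝 0) := by
    have hT : Tendsto (fun s : ℝ =>
        (Real.exp (r*s^2) - (1 + r*s^2))/s^3
        - (1/2 + a*s) * ((Real.exp (σ*s) - (1 + σ*s + σ^2*s^2/2 + σ^3*s^3/6)) / s^3)
        - (1/2 - a*s) * ((Real.exp (-σ*s) - (1 + -σ*s + (-σ)^2*s^2/2 + (-σ)^3*s^3/6)) / s^3)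
        - (a*σ^3/3) * s) l (𝓝 0) := by
      have h1 := (exp_sq_taylor r).sub ((tendsto_lin (1/2) a).mul (exp_taylor3 σ))
      have h2 := h1.sub ((tendsto_lin (1/2) (-a)).mul (exp_taylor3 (-σ)))
      have h3 := h2.sub (by simpa using tendsto_lin 0 (a*σ^3/3))
      have h3' := h3
      norm_num at h3'
      refine h3'.congr (fun s => ?_)
      ring
    refine hT.congr' ?_
    filter_upwards [self_mem_nhdsWithin] with s (hs : 0 < s)
    exact (M_helper r σ a s _ _ _ hσ.ne' (ne_of_gt hs) ha).symm
  -- quadratic order expansion of P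
  have hquad : Tendsto (fun s : ℝ => (P s - 1/2 - a*s)/s^2) l (𝓝 0) := by
    have hT := hM.mul hsD
    rw [zero_mul] at hT
    refine hT.congr' ?_
    filter_upwards [self_mem_nhdsWithin] with s (hs : 0 < s)
    have hDs := (hD s hs).ne'
    have := quad_helper a s (Real.exp (r*s^2) - Real.exp (-σ*s))
      (Real.exp (σ*s) - Real.exp (-σ*s)) (ne_of_gt hs) hDs
    simp only [hP]
    rw [← this]
    congr 1
    ring
  -- first order: (P s - 1/2)/s → a
  have hlin : Tendsto (fun s : ℝ => (P s - 1/2)/s) l (𝓝 a) := by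
    have hid : Tendsto (fun s : ℝ => s) l (𝓝 0) := by simpa using tendsto_lin 0 1
    have hT := (hquad.mul hid).add tendsto_const_nhds (b := a)
    rw [zero_mul, zero_add] at hT
    refine hT.congr' ?_
    filter_upwards [self_mem_nhdsWithin] with s (hs : 0 < s)
    exact lin_helper a s (P s) (ne_of_gt hs)
  -- full expansion in s
  have hF : Tendsto (fun s : ℝ =>
      (P s * (1 - β * s * (1 - P s)) - 1/2 - c * s) / s^2) l (𝓝 0) := by
    have hid : Tendsto (fun s : ℝ => s) l (𝓝 0) := by simpa using tendsto_lin 0 1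
    have hT := hquad.add ((((hlin.mul hlin).const_mul β).mul hid))
    rw [mul_zero, add_zero] at hT
    refine hT.congr' ?_
    filter_upwards [self_mem_nhdsWithin] with s (hs : 0 < s)
    have hca : c = a - β/4 := by
      rw [hc, ha]; field_simp; ring
    rw [hca]
    exact final_helper a β s (P s) (ne_of_gt hs)
  -- substitute s = √Δt
  have hsqrt : Tendsto Real.sqrt l l := by
    apply tendsto_nhdsWithin_of_tendsto_nhds_of_eventually_within
    · have := (Real.continuous_sqrt.tendsto 0)
      rw [Real.sqrt_zero] at this
      exact this.mono_left nhdsWithin_le_nhds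
    · filter_upwards [self_mem_nhdsWithin] with x (hx : 0 < x)
      exact Real.sqrt_pos.2 hx
  have hcomp := hF.comp hsqrt
  refine hcomp.congr' ?_
  filter_upwards [self_mem_nhdsWithin] with Δt (hΔt : 0 < Δt)
  simp only [Function.comp, hP]
  rw [Real.sq_sqrt hΔt.le]
end

section
/- The function V⁺(t,x) = x e^{s σ (T−t)} Φ(d₁⁺) − K e^{−r(T−t)} Φ(d₂⁺), with d₁⁺ = (log(x/K) + (r + sσ + σ²/2)(T−t))/(σ√(T−t)) and d₂⁺ = d₁⁺ − σ√(T−t), solves the nonlinear PDE V_t + r x V_x + (σ²x²/2) V_{xx} + s|σ x V_x| − r V = 0 on (0,T) × (0,∞). -/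
open Real

/-- Standard normal cumulative distribution function. -/
noncomputable def stdNormalCDF (y : ℝ) : ℝ :=
  ∫ u in Set.Iio y, (2 * π) ^ (-(1 : ℝ) / 2) * Real.exp (-u ^ 2 / 2)

open MeasureTheory

noncomputable def phiN (u : ℝ) : ℝ := (2 * π) ^ (-(1 : ℝ) / 2) * Real.exp (-u ^ 2 / 2)

lemma phiN_nonneg (u : ℝ) : 0 ≤ phiN u :=
  mul_nonneg (Real.rpow_nonneg (by positivity) _) (Real.exp_pos _).le

lemma continuous_phiN : Continuous phiN := by
  unfold phiN; fun_prop

lemma integrable_phiN : Integrable phiN := by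
  have h := integrable_exp_neg_mul_sq (by norm_num : (0:ℝ) < 1/2)
  have : phiN = fun u => (2 * π) ^ (-(1 : ℝ) / 2) * Real.exp (-(1/2) * u ^ 2) := by
    funext u; unfold phiN; ring_nf
  rw [this]
  exact h.const_mul _

lemma stdNormalCDF_eq (z : ℝ) :
    stdNormalCDF z = (∫ u in Set.Iic 0, phiN u) + ∫ u in (0:ℝ)..z, phiN u := by
  rw [← intervalIntegral.integral_Iic_sub_Iic integrable_phiN.integrableOn
    integrable_phiN.integrableOn]
  unfold stdNormalCDF phiN
  rw [← MeasureTheory.integral_Iic_eq_integral_Iio]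
  ring

lemma stdNormalCDF_nonneg (z : ℝ) : 0 ≤ stdNormalCDF z := by
  unfold stdNormalCDF
  exact integral_nonneg fun u =>
    mul_nonneg (Real.rpow_nonneg (by positivity) _) (Real.exp_pos _).le

lemma hasDerivAt_stdNormalCDF (y : ℝ) : HasDerivAt stdNormalCDF (phiN y) y := by
  have : stdNormalCDF = fun z => (∫ u in Set.Iic 0, phiN u) + ∫ u in (0:ℝ)..z, phiN u :=
    funext stdNormalCDF_eq
  rw [this]
  exact ((intervalIntegral.integral_hasDerivAt_right
    integrable_phiN.intervalIntegrable
    (continuous_phiN.stronglyMeasurableAtFilter _ _)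
    continuous_phiN.continuousAt)).const_add _


/-- `d₁⁺ = (log(x/K) + (r + sσ + σ²/2)(T − t)) / (σ √(T − t))`. -/
noncomputable def d1p (T K σ r s t x : ℝ) : ℝ :=
  (Real.log (x / K) + (r + s * σ + σ ^ 2 / 2) * (T - t)) / (σ * Real.sqrt (T - t))

/-- The risk-averse ask-price value function
`V⁺(t,x) = x e^{sσ(T−t)} Φ(d₁⁺) − K e^{−r(T−t)} Φ(d₂⁺)` with `d₂⁺ = d₁⁺ − σ√(T−t)`. -/
noncomputable def Vplus (T K σ r s t x : ℝ) : ℝ :=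
  x * Real.exp (s * σ * (T - t)) * stdNormalCDF (d1p T K σ r s t x) -
    K * Real.exp (-r * (T - t)) * stdNormalCDF (d1p T K σ r s t x - σ * Real.sqrt (T - t))

lemma key_identity (T K σ r s t x : ℝ) (hK : 0 < K) (hσ : 0 < σ)
    (hτ : 0 < T - t) (hx : 0 < x) :
    x * Real.exp (s * σ * (T - t)) * phiN (d1p T K σ r s t x)
      = K * Real.exp (-r * (T - t)) * phiN (d1p T K σ r s t x - σ * Real.sqrt (T - t)) := by
  set d1 := d1p T K σ r s t x with hd1
  set a := σ * Real.sqrt (T - t) with ha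
  have hrt : 0 < Real.sqrt (T - t) := Real.sqrt_pos.2 hτ
  have ha0 : 0 < a := mul_pos hσ hrt
  have ha2 : a ^ 2 = σ ^ 2 * (T - t) := by
    rw [ha, mul_pow, Real.sq_sqrt hτ.le]
  have hd1a : d1 * a = Real.log (x / K) + (r + s * σ + σ ^ 2 / 2) * (T - t) := by
    rw [hd1, d1p, ← ha, div_mul_cancel₀ _ ha0.ne']
  have h2 : d1 * a - a ^ 2 / 2 = Real.log (x / K) + (r + s * σ) * (T - t) := by
    rw [hd1a, ha2]; ring
  have hphi : phiN (d1 - a) = phiN d1 * (x / K * Real.exp ((r + s * σ) * (T - t))) := by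
    unfold phiN
    rw [show -(d1 - a) ^ 2 / 2 = -d1 ^ 2 / 2 + (d1 * a - a ^ 2 / 2) by ring,
      Real.exp_add, h2, Real.exp_add, Real.exp_log (div_pos hx hK)]
    ring
  rw [hphi]
  rw [show K * Real.exp (-r * (T - t)) * (phiN d1 * (x / K * Real.exp ((r + s * σ) * (T - t))))
    = x * (Real.exp (-r * (T - t)) * Real.exp ((r + s * σ) * (T - t))) * phiN d1 * (K / K) by ring,
    div_self hK.ne', ← Real.exp_add]
  ring_nf

lemma hasDerivAt_d1p_x (T K σ r s t x : ℝ) (hK : 0 < K) (hσ : 0 < σ)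
    (hτ : 0 < T - t) (hx : 0 < x) :
    HasDerivAt (fun ξ => d1p T K σ r s t ξ) (1 / (x * (σ * Real.sqrt (T - t)))) x := by
  have hrt : 0 < Real.sqrt (T - t) := Real.sqrt_pos.2 hτ
  have ha0 : 0 < σ * Real.sqrt (T - t) := mul_pos hσ hrt
  have hlog : HasDerivAt (fun ξ : ℝ => Real.log (ξ / K)) (1 / x) x := by
    have h := (((hasDerivAt_id x).div_const K).log (div_ne_zero hx.ne' hK.ne'))
    convert h using 1
    · rfl
    · simp only [id]; field_simp
  have h := ((hlog.add_const ((r + s * σ + σ ^ 2 / 2) * (T - t))).div_const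
    (σ * Real.sqrt (T - t)))
  have he : (fun ξ => (Real.log (ξ / K) + (r + s * σ + σ ^ 2 / 2) * (T - t)) /
      (σ * Real.sqrt (T - t))) = fun ξ => d1p T K σ r s t ξ := by
    funext ξ; rw [d1p]
  rw [he] at h
  refine h.congr_deriv ?_
  rw [div_div]

lemma hasDerivAt_Vplus_x (T K σ r s t x : ℝ) (hK : 0 < K) (hσ : 0 < σ)
    (hτ : 0 < T - t) (hx : 0 < x) :
    HasDerivAt (fun ξ => Vplus T K σ r s t ξ)
      (Real.exp (s * σ * (T - t)) * stdNormalCDF (d1p T K σ r s t x)) x := by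
  have hrt : 0 < Real.sqrt (T - t) := Real.sqrt_pos.2 hτ
  have ha0 : 0 < σ * Real.sqrt (T - t) := mul_pos hσ hrt
  set E := Real.exp (s * σ * (T - t))
  set F := Real.exp (-r * (T - t))
  have hd := hasDerivAt_d1p_x T K σ r s t x hK hσ hτ hx
  have hΦ1 : HasDerivAt (fun ξ => stdNormalCDF (d1p T K σ r s t ξ))
      (phiN (d1p T K σ r s t x) * (1 / (x * (σ * Real.sqrt (T - t))))) x :=
    (hasDerivAt_stdNormalCDF _).comp x hd
  have hΦ2 : HasDerivAt (fun ξ => stdNormalCDF (d1p T K σ r s t ξ - σ * Real.sqrt (T - t)))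
      (phiN (d1p T K σ r s t x - σ * Real.sqrt (T - t)) * (1 / (x * (σ * Real.sqrt (T - t))))) x :=
    (hasDerivAt_stdNormalCDF _).comp x (hd.sub_const _)
  have h1 : HasDerivAt (fun ξ => ξ * E * stdNormalCDF (d1p T K σ r s t ξ))
      (1 * E * stdNormalCDF (d1p T K σ r s t x) +
        x * E * (phiN (d1p T K σ r s t x) * (1 / (x * (σ * Real.sqrt (T - t)))))) x :=
    ((hasDerivAt_id x).mul_const E).mul hΦ1
  have h2 : HasDerivAt (fun ξ => K * F * stdNormalCDF (d1p T K σ r s t ξ - σ * Real.sqrt (T - t)))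
      (K * F * (phiN (d1p T K σ r s t x - σ * Real.sqrt (T - t)) *
        (1 / (x * (σ * Real.sqrt (T - t)))))) x := hΦ2.const_mul _
  have h := h1.sub h2
  have hkey := key_identity T K σ r s t x hK hσ hτ hx
  have : (fun ξ => ξ * E * stdNormalCDF (d1p T K σ r s t ξ) -
      K * F * stdNormalCDF (d1p T K σ r s t ξ - σ * Real.sqrt (T - t)))
      = fun ξ => Vplus T K σ r s t ξ := by
    funext ξ; rw [Vplus]
  rw [← this]
  refine h.congr_deriv ?_
  rw [show x * E * (phiN (d1p T K σ r s t x) * (1 / (x * (σ * Real.sqrt (T - t)))))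
      = x * E * phiN (d1p T K σ r s t x) * (1 / (x * (σ * Real.sqrt (T - t)))) by ring, hkey]
  ring

lemma hasDerivAt_sub_sqrt (T σ t : ℝ) (hτ : 0 < T - t) :
    HasDerivAt (fun t' => σ * Real.sqrt (T - t'))
      (σ * (1 / (2 * Real.sqrt (T - t)) * -1)) t :=
  ((Real.hasDerivAt_sqrt hτ.ne').comp t (((hasDerivAt_id t).const_sub T))).const_mul σ

lemma hasDerivAt_d1p_t (T K σ r s t x : ℝ) (hσ : 0 < σ) (hτ : 0 < T - t) :
    HasDerivAt (fun t' => d1p T K σ r s t' x)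
      (((r + s * σ + σ ^ 2 / 2) * -1 * (σ * Real.sqrt (T - t)) -
        (Real.log (x / K) + (r + s * σ + σ ^ 2 / 2) * (T - t)) *
          (σ * (1 / (2 * Real.sqrt (T - t)) * -1))) / (σ * Real.sqrt (T - t)) ^ 2) t := by
  have hrt : 0 < Real.sqrt (T - t) := Real.sqrt_pos.2 hτ
  have ha0 : σ * Real.sqrt (T - t) ≠ 0 := (mul_pos hσ hrt).ne'
  have hN : HasDerivAt (fun t' => Real.log (x / K) + (r + s * σ + σ ^ 2 / 2) * (T - t'))
      ((r + s * σ + σ ^ 2 / 2) * -1) t :=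
    (((hasDerivAt_id t).const_sub T).const_mul _).const_add _
  exact hN.div (hasDerivAt_sub_sqrt T σ t hτ) ha0

lemma hasDerivAt_Vplus_t (T K σ r s t x : ℝ) (hσ : 0 < σ) (hτ : 0 < T - t) :
    HasDerivAt (fun t' => Vplus T K σ r s t' x)
      ((x * (Real.exp (s * σ * (T - t)) * (s * σ * -1)) * stdNormalCDF (d1p T K σ r s t x) +
        x * Real.exp (s * σ * (T - t)) * (phiN (d1p T K σ r s t x) *
          (((r + s * σ + σ ^ 2 / 2) * -1 * (σ * Real.sqrt (T - t)) -
            (Real.log (x / K) + (r + s * σ + σ ^ 2 / 2) * (T - t)) *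
              (σ * (1 / (2 * Real.sqrt (T - t)) * -1))) / (σ * Real.sqrt (T - t)) ^ 2))) -
       (K * (Real.exp (-r * (T - t)) * (-r * -1)) *
          stdNormalCDF (d1p T K σ r s t x - σ * Real.sqrt (T - t)) +
        K * Real.exp (-r * (T - t)) * (phiN (d1p T K σ r s t x - σ * Real.sqrt (T - t)) *
          ((((r + s * σ + σ ^ 2 / 2) * -1 * (σ * Real.sqrt (T - t)) -
            (Real.log (x / K) + (r + s * σ + σ ^ 2 / 2) * (T - t)) *
              (σ * (1 / (2 * Real.sqrt (T - t)) * -1))) / (σ * Real.sqrt (T - t)) ^ 2) -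
            σ * (1 / (2 * Real.sqrt (T - t)) * -1))))) t := by
  have hd1 := hasDerivAt_d1p_t T K σ r s t x hσ hτ
  have hE : HasDerivAt (fun t' => Real.exp (s * σ * (T - t')))
      (Real.exp (s * σ * (T - t)) * (s * σ * -1)) t :=
    ((((hasDerivAt_id t).const_sub T).const_mul (s * σ))).exp
  have hF : HasDerivAt (fun t' => Real.exp (-r * (T - t')))
      (Real.exp (-r * (T - t)) * (-r * -1)) t :=
    ((((hasDerivAt_id t).const_sub T).const_mul (-r))).exp
  have hΦ1 : HasDerivAt (fun t' => stdNormalCDF (d1p T K σ r s t' x))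
      (phiN (d1p T K σ r s t x) *
        (((r + s * σ + σ ^ 2 / 2) * -1 * (σ * Real.sqrt (T - t)) -
          (Real.log (x / K) + (r + s * σ + σ ^ 2 / 2) * (T - t)) *
            (σ * (1 / (2 * Real.sqrt (T - t)) * -1))) / (σ * Real.sqrt (T - t)) ^ 2)) t :=
    (hasDerivAt_stdNormalCDF _).comp t hd1
  have hΦ2 : HasDerivAt (fun t' => stdNormalCDF (d1p T K σ r s t' x - σ * Real.sqrt (T - t')))
      (phiN (d1p T K σ r s t x - σ * Real.sqrt (T - t)) *
        ((((r + s * σ + σ ^ 2 / 2) * -1 * (σ * Real.sqrt (T - t)) -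
          (Real.log (x / K) + (r + s * σ + σ ^ 2 / 2) * (T - t)) *
            (σ * (1 / (2 * Real.sqrt (T - t)) * -1))) / (σ * Real.sqrt (T - t)) ^ 2) -
          σ * (1 / (2 * Real.sqrt (T - t)) * -1))) t :=
    (hasDerivAt_stdNormalCDF _).comp t (hd1.sub (hasDerivAt_sub_sqrt T σ t hτ))
  have h1 := (hE.const_mul x).mul hΦ1
  have h2 := (hF.const_mul K).mul hΦ2
  have h := h1.sub h2
  have he : (fun t' => x * Real.exp (s * σ * (T - t')) * stdNormalCDF (d1p T K σ r s t' x) -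
      K * Real.exp (-r * (T - t')) *
        stdNormalCDF (d1p T K σ r s t' x - σ * Real.sqrt (T - t')))
      = fun t' => Vplus T K σ r s t' x := by
    funext t'; rw [Vplus]
  rw [← he]
  exact h

/-- `V⁺` solves the nonlinear PDE
`V_t + r x V_x + (σ² x²/2) V_xx + s |σ x V_x| − r V = 0` on `(0,T) × (0,∞)`. -/
theorem stmt_11 (T K σ r s : ℝ) (hT : 0 < T) (hK : 0 < K) (hσ : 0 < σ) (hs : 0 ≤ s) :
    ∀ t ∈ Set.Ioo (0 : ℝ) T, ∀ x ∈ Set.Ioi (0 : ℝ),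
      deriv (fun τ => Vplus T K σ r s τ x) t +
        r * x * deriv (fun ξ => Vplus T K σ r s t ξ) x +
        σ ^ 2 * x ^ 2 / 2 * deriv (deriv (fun ξ => Vplus T K σ r s t ξ)) x +
        s * |σ * x * deriv (fun ξ => Vplus T K σ r s t ξ) x| -
        r * Vplus T K σ r s t x = 0 := by
  intro t ht x hx
  have hτ : 0 < T - t := sub_pos.2 ht.2
  have hx0 : 0 < x := hx
  have hrt : 0 < Real.sqrt (T - t) := Real.sqrt_pos.2 hτ
  -- first x-derivative
  have hVx := hasDerivAt_Vplus_x T K σ r s t x hK hσ hτ hx0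
  have hVx' : deriv (fun ξ => Vplus T K σ r s t ξ) x
      = Real.exp (s * σ * (T - t)) * stdNormalCDF (d1p T K σ r s t x) := hVx.deriv
  -- second x-derivative
  have hev : deriv (fun ξ => Vplus T K σ r s t ξ) =ᶠ[nhds x]
      fun ξ => Real.exp (s * σ * (T - t)) * stdNormalCDF (d1p T K σ r s t ξ) := by
    filter_upwards [Ioi_mem_nhds hx0] with ξ hξ
    exact (hasDerivAt_Vplus_x T K σ r s t ξ hK hσ hτ hξ).deriv
  have hVxx : deriv (deriv (fun ξ => Vplus T K σ r s t ξ)) x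
      = Real.exp (s * σ * (T - t)) * (phiN (d1p T K σ r s t x) *
          (1 / (x * (σ * Real.sqrt (T - t))))) := by
    rw [hev.deriv_eq]
    exact (((hasDerivAt_stdNormalCDF _).comp x
      (hasDerivAt_d1p_x T K σ r s t x hK hσ hτ hx0)).const_mul _).deriv
  -- t-derivative
  have hVt' : deriv (fun τ => Vplus T K σ r s τ x) t = _ :=
    (hasDerivAt_Vplus_t T K σ r s t x hσ hτ).deriv
  -- absolute value
  have habs : |σ * x * deriv (fun ξ => Vplus T K σ r s t ξ) x|
      = σ * x * (Real.exp (s * σ * (T - t)) * stdNormalCDF (d1p T K σ r s t x)) := by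
    rw [hVx']
    exact abs_of_nonneg (mul_nonneg (mul_nonneg hσ.le hx0.le)
      (mul_nonneg (Real.exp_pos _).le (stdNormalCDF_nonneg _)))
  have hkey := key_identity T K σ r s t x hK hσ hτ hx0
  rw [hVt', habs, hVx', hVxx, Vplus]
  set d1 := d1p T K σ r s t x
  set rt := Real.sqrt (T - t)
  set E := Real.exp (s * σ * (T - t))
  set F := Real.exp (-r * (T - t))
  set Φ1 := stdNormalCDF d1
  set Φ2 := stdNormalCDF (d1 - σ * rt)
  set φ1 := phiN d1
  set φ2 := phiN (d1 - σ * rt)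
  set L := Real.log (x / K)
  set c := r + s * σ + σ ^ 2 / 2
  set D1 := (c * -1 * (σ * rt) - (L + c * (T - t)) * (σ * (1 / (2 * rt) * -1))) / (σ * rt) ^ 2
  have hrtne : rt ≠ 0 := hrt.ne'
  have e1 : σ ^ 2 * x ^ 2 / 2 * (E * (φ1 * (1 / (x * (σ * rt)))))
      = K * F * φ2 * σ / (2 * rt) := by
    rw [← hkey]
    field_simp
  linear_combination e1 + D1 * hkey
end

section
/- The function V⁻(t,x) = x e^{−sσ(T−t)} Φ(d₁⁻) − K e^{−r(T−t)} Φ(d₂⁻), with d₁⁻ = (log(x/K) + (r − sσ + σ²/2)(T−t))/(σ√(T−t)) and d₂⁻ = d₁⁻ − σ√(T−t), solves the nonlinear PDE V_t + r x V_x + (σ²x²/2) V_{xx} − s|σ x V_x| − r V = 0 on (0,T) × (0,∞), and moreover V⁻(t,x) ≤ V⁺(t,x) for all (t,x) ∈ (0,T) × (0,∞), where V⁺ is as in the ask-price formula. -/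
open Real

/-- `d₁⁻ = (log(x/K) + (r − sσ + σ²/2)(T − t)) / (σ √(T − t))`. -/
noncomputable def d1m (T K σ r s t x : ℝ) : ℝ :=
  (Real.log (x / K) + (r - s * σ + σ ^ 2 / 2) * (T - t)) / (σ * Real.sqrt (T - t))

/-- The bid-price value function `V⁻(t,x) = x e^{−sσ(T−t)} Φ(d₁⁻) − K e^{−r(T−t)} Φ(d₂⁻)`. -/
noncomputable def Vminus (T K σ r s t x : ℝ) : ℝ :=
  x * Real.exp (-(s * σ) * (T - t)) * stdNormalCDF (d1m T K σ r s t x) -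
    K * Real.exp (-r * (T - t)) * stdNormalCDF (d1m T K σ r s t x - σ * Real.sqrt (T - t))

section Aux

/-- The standard normal density. -/
noncomputable def phi (y : ℝ) : ℝ := (2 * π) ^ (-(1 : ℝ) / 2) * Real.exp (-y ^ 2 / 2)

lemma phi_cont : Continuous phi := by
  unfold phi; fun_prop

lemma phi_nonneg (y : ℝ) : 0 ≤ phi y :=
  mul_nonneg (Real.rpow_nonneg (by positivity) _) (Real.exp_pos _).le

open MeasureTheory in
lemma phi_integrable : Integrable phi := by
  have h := (integrable_exp_neg_mul_sq (by norm_num : (0:ℝ) < 1/2)).const_mul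
    ((2 * π) ^ (-(1 : ℝ) / 2))
  refine h.congr ?_
  filter_upwards with u
  unfold phi
  ring_nf

open MeasureTheory in
lemma hasDerivAt_cdf (y : ℝ) : HasDerivAt stdNormalCDF (phi y) y := by
  have hrep : ∀ z : ℝ, stdNormalCDF z = (∫ u in Set.Iic 0, phi u) + ∫ u in (0:ℝ)..z, phi u := by
    intro z
    rw [← intervalIntegral.integral_Iic_sub_Iic (phi_integrable.integrableOn)
      (phi_integrable.integrableOn)]
    have : stdNormalCDF z = ∫ u in Set.Iic z, phi u := by
      unfold stdNormalCDF phi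
      exact setIntegral_congr_set MeasureTheory.Iio_ae_eq_Iic
    rw [this]; ring
  have hF : HasDerivAt (fun z => (∫ u in Set.Iic 0, phi u) + ∫ u in (0:ℝ)..z, phi u) (phi y) y := by
    refine HasDerivAt.const_add _ ?_
    exact intervalIntegral.integral_hasDerivAt_right
      phi_integrable.intervalIntegrable
      phi_cont.aestronglyMeasurable.stronglyMeasurableAtFilter
      phi_cont.continuousAt
  exact hF.congr_of_eventuallyEq (Filter.Eventually.of_forall fun z => (hrep z))

open MeasureTheory in
lemma cdf_nonneg (y : ℝ) : 0 ≤ stdNormalCDF y :=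
  setIntegral_nonneg measurableSet_Iio fun u _ => phi_nonneg u

lemma key_identity_s12 (K σ b x τ : ℝ) (hK : 0 < K) (hσ : 0 < σ) (hx : 0 < x) (hτ : 0 < τ) :
    x * Real.exp (b * τ) * phi ((Real.log (x / K) + (b + σ ^ 2 / 2) * τ) / (σ * Real.sqrt τ)) =
      K * phi ((Real.log (x / K) + (b + σ ^ 2 / 2) * τ) / (σ * Real.sqrt τ) - σ * Real.sqrt τ) := by
  have hq0 : 0 < Real.sqrt τ := Real.sqrt_pos.mpr hτ
  have hq2 : Real.sqrt τ ^ 2 = τ := Real.sq_sqrt hτ.le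
  set q := Real.sqrt τ
  set L := Real.log (x / K) with hL
  set D := (L + (b + σ ^ 2 / 2) * τ) / (σ * q) with hD
  have hDq : D * (σ * q) = L + (b + σ ^ 2 / 2) * τ := by
    rw [hD]; field_simp
  have h1 : Real.exp (-D ^ 2 / 2) =
      Real.exp (-(D - σ * q) ^ 2 / 2) * (K / x) * Real.exp (-(b * τ)) := by
    rw [← Real.exp_log (show (0:ℝ) < K / x from div_pos hK hx), ← Real.exp_add, ← Real.exp_add]
    congr 1
    have hlog : Real.log (K / x) = -L := by
      rw [hL, ← Real.log_inv]; congr 1; field_simp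
    rw [hlog]
    nlinarith [hDq, hq2]
  unfold phi
  rw [h1]
  have he : Real.exp (b * τ) * Real.exp (-(b * τ)) = 1 := by
    rw [← Real.exp_add]; simp
  set c := (2 * π) ^ (-(1:ℝ) / 2)
  set E := Real.exp (-(D - σ * q) ^ 2 / 2)
  field_simp
  linear_combination c * E * he

/-- The discounted key identity with `b = r - sσ`, in terms of `d1m`. -/
lemma key_m (T K σ r s t x : ℝ) (hK : 0 < K) (hσ : 0 < σ) (ht : t < T) (hx : 0 < x) :
    x * Real.exp (-(s * σ) * (T - t)) * phi (d1m T K σ r s t x) =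
      K * Real.exp (-r * (T - t)) * phi (d1m T K σ r s t x - σ * Real.sqrt (T - t)) := by
  have h0 : x * Real.exp ((r - s * σ) * (T - t)) * phi (d1m T K σ r s t x) =
      K * phi (d1m T K σ r s t x - σ * Real.sqrt (T - t)) :=
    key_identity_s12 K σ (r - s * σ) x (T - t) hK hσ hx (by linarith)
  have hsplit : Real.exp (-(s * σ) * (T - t)) =
      Real.exp ((r - s * σ) * (T - t)) * Real.exp (-r * (T - t)) := by
    rw [← Real.exp_add]; ring_nf
  rw [hsplit]
  linear_combination Real.exp (-r * (T - t)) * h0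

lemma hasDerivAt_d1m_x (T K σ r s t x : ℝ) (hK : 0 < K) (hσ : 0 < σ) (ht : t < T) (hx : 0 < x) :
    HasDerivAt (fun ξ => d1m T K σ r s t ξ) (1 / x / (σ * Real.sqrt (T - t))) x := by
  have hlog : HasDerivAt (fun ξ : ℝ => Real.log (ξ / K)) (1 / x) x := by
    have h1 : HasDerivAt (fun ξ : ℝ => ξ / K) (1 / K) x := (hasDerivAt_id x).div_const K
    have h2 := h1.log (by positivity)
    convert h2 using 1
    field_simp
  exact (hlog.add_const ((r - s * σ + σ ^ 2 / 2) * (T - t))).div_const (σ * Real.sqrt (T - t))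

lemma hasDerivAt_Vminus_x (T K σ r s t x : ℝ) (hK : 0 < K) (hσ : 0 < σ) (ht : t < T)
    (hx : 0 < x) :
    HasDerivAt (fun ξ => Vminus T K σ r s t ξ)
      (Real.exp (-(s * σ) * (T - t)) * stdNormalCDF (d1m T K σ r s t x)) x := by
  have hq0 : 0 < Real.sqrt (T - t) := Real.sqrt_pos.mpr (by linarith)
  have hd1 := hasDerivAt_d1m_x T K σ r s t x hK hσ ht hx
  have hΦ1 := (hasDerivAt_cdf (d1m T K σ r s t x)).comp x hd1
  have hΦ2 := (hasDerivAt_cdf (d1m T K σ r s t x - σ * Real.sqrt (T - t))).comp x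
    (hd1.sub_const (σ * Real.sqrt (T - t)))
  have h1 := ((hasDerivAt_id x).mul_const (Real.exp (-(s * σ) * (T - t)))).mul hΦ1
  have h2 := hΦ2.const_mul (K * Real.exp (-r * (T - t)))
  have htot := h1.sub h2
  have hkey := key_m T K σ r s t x hK hσ ht hx
  have heq : 1 * Real.exp (-(s * σ) * (T - t)) * stdNormalCDF (d1m T K σ r s t x) +
      x * Real.exp (-(s * σ) * (T - t)) *
        (phi (d1m T K σ r s t x) * (1 / x / (σ * Real.sqrt (T - t)))) -
      K * Real.exp (-r * (T - t)) *
        (phi (d1m T K σ r s t x - σ * Real.sqrt (T - t)) * (1 / x / (σ * Real.sqrt (T - t)))) =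
      Real.exp (-(s * σ) * (T - t)) * stdNormalCDF (d1m T K σ r s t x) := by
    linear_combination (1 / x / (σ * Real.sqrt (T - t))) * hkey
  rw [← heq]
  exact htot

end Aux

section Aux2

lemma hasDerivAt_Vx_fun (T K σ r s t x : ℝ) (hK : 0 < K) (hσ : 0 < σ) (ht : t < T)
    (hx : 0 < x) :
    HasDerivAt (fun ξ => Real.exp (-(s * σ) * (T - t)) * stdNormalCDF (d1m T K σ r s t ξ))
      (Real.exp (-(s * σ) * (T - t)) *
        (phi (d1m T K σ r s t x) * (1 / x / (σ * Real.sqrt (T - t))))) x :=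
  ((hasDerivAt_cdf _).comp x (hasDerivAt_d1m_x T K σ r s t x hK hσ ht hx)).const_mul _

lemma hasDerivAt_d1m_t (T K σ r s t x : ℝ) (hσ : 0 < σ) (ht : t < T) :
    HasDerivAt (fun t' => d1m T K σ r s t' x)
      (Real.log (x / K) / (2 * σ * Real.sqrt (T - t) ^ 3) -
        (r - s * σ + σ ^ 2 / 2) / (2 * σ * Real.sqrt (T - t))) t := by
  have hτ0 : (0:ℝ) < T - t := by linarith
  have hq0 : 0 < Real.sqrt (T - t) := Real.sqrt_pos.mpr hτ0
  have hq2 : Real.sqrt (T - t) ^ 2 = T - t := Real.sq_sqrt hτ0.le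
  have hτ' : HasDerivAt (fun t' : ℝ => T - t') (-1) t := by
    simpa using (hasDerivAt_id t).const_sub T
  have hq' : HasDerivAt (fun t' => Real.sqrt (T - t')) (1 / (2 * Real.sqrt (T - t)) * (-1)) t :=
    (Real.hasDerivAt_sqrt hτ0.ne').comp t hτ'
  have hnum : HasDerivAt (fun t' => Real.log (x / K) + (r - s * σ + σ ^ 2 / 2) * (T - t'))
      ((r - s * σ + σ ^ 2 / 2) * (-1)) t :=
    (hτ'.const_mul (r - s * σ + σ ^ 2 / 2)).const_add (Real.log (x / K))
  have hden : HasDerivAt (fun t' => σ * Real.sqrt (T - t'))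
      (σ * (1 / (2 * Real.sqrt (T - t)) * (-1))) t := hq'.const_mul σ
  have hdiv := hnum.div hden (by positivity)
  have heq : ((r - s * σ + σ ^ 2 / 2) * (-1) * (σ * Real.sqrt (T - t)) -
        (Real.log (x / K) + (r - s * σ + σ ^ 2 / 2) * (T - t)) *
          (σ * (1 / (2 * Real.sqrt (T - t)) * (-1)))) / (σ * Real.sqrt (T - t)) ^ 2 =
      Real.log (x / K) / (2 * σ * Real.sqrt (T - t) ^ 3) -
        (r - s * σ + σ ^ 2 / 2) / (2 * σ * Real.sqrt (T - t)) := by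
    obtain ⟨q, hq, hq2', hq0'⟩ : ∃ q, Real.sqrt (T - t) = q ∧ q ^ 2 = T - t ∧ 0 < q :=
      ⟨Real.sqrt (T - t), rfl, hq2, hq0⟩
    rw [hq, ← hq2']
    field_simp
    ring
  rw [← heq]
  exact hdiv

lemma hasDerivAt_Vminus_t (T K σ r s t x : ℝ) (hσ : 0 < σ) (ht : t < T) :
    HasDerivAt (fun t' => Vminus T K σ r s t' x)
      (x * (Real.exp (-(s * σ) * (T - t)) * (s * σ)) * stdNormalCDF (d1m T K σ r s t x) +
        x * Real.exp (-(s * σ) * (T - t)) *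
          (phi (d1m T K σ r s t x) *
            (Real.log (x / K) / (2 * σ * Real.sqrt (T - t) ^ 3) -
              (r - s * σ + σ ^ 2 / 2) / (2 * σ * Real.sqrt (T - t)))) -
        (K * (Real.exp (-r * (T - t)) * r) *
            stdNormalCDF (d1m T K σ r s t x - σ * Real.sqrt (T - t)) +
          K * Real.exp (-r * (T - t)) *
            (phi (d1m T K σ r s t x - σ * Real.sqrt (T - t)) *
              (Real.log (x / K) / (2 * σ * Real.sqrt (T - t) ^ 3) -
                (r - s * σ + σ ^ 2 / 2) / (2 * σ * Real.sqrt (T - t)) +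
                σ / (2 * Real.sqrt (T - t)))))) t := by
  have hτ0 : (0:ℝ) < T - t := by linarith
  have hq0 : 0 < Real.sqrt (T - t) := Real.sqrt_pos.mpr hτ0
  have hτ' : HasDerivAt (fun t' : ℝ => T - t') (-1) t := by
    simpa using (hasDerivAt_id t).const_sub T
  have hq' : HasDerivAt (fun t' => Real.sqrt (T - t')) (1 / (2 * Real.sqrt (T - t)) * (-1)) t :=
    (Real.hasDerivAt_sqrt hτ0.ne').comp t hτ'
  have hd1 := hasDerivAt_d1m_t T K σ r s t x hσ ht
  have hΦ1 := (hasDerivAt_cdf (d1m T K σ r s t x)).comp t hd1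
  have hd2 := hd1.sub (hq'.const_mul σ)
  have hΦ2 := (hasDerivAt_cdf (d1m T K σ r s t x - σ * Real.sqrt (T - t))).comp t hd2
  have hA : HasDerivAt (fun t' => Real.exp (-(s * σ) * (T - t')))
      (Real.exp (-(s * σ) * (T - t)) * (-(s * σ) * -1)) t := (hτ'.const_mul (-(s * σ))).exp
  have hB : HasDerivAt (fun t' => Real.exp (-r * (T - t')))
      (Real.exp (-r * (T - t)) * (-r * -1)) t := (hτ'.const_mul (-r)).exp
  have h1 := (hA.const_mul x).mul hΦ1
  have h2 := (hB.const_mul K).mul hΦ2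
  have htot := h1.sub h2
  convert htot using 1
  · rfl
  · rfl
  · rfl
  simp only [Function.comp, Pi.sub_apply]
  ring

end Aux2

lemma Vminus_le_Vplus (T K σ r s t x : ℝ) (hK : 0 < K) (hσ : 0 < σ) (hs : 0 ≤ s)
    (ht : t < T) (hx : 0 < x) :
    Vminus T K σ r s t x ≤ Vplus T K σ r s t x := by
  have hτ0 : (0:ℝ) < T - t := by linarith
  have hq0 : 0 < Real.sqrt (T - t) := Real.sqrt_pos.mpr hτ0
  have hderiv : ∀ b : ℝ, HasDerivAt (fun b' => x * Real.exp ((b' - r) * (T - t)) *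
      stdNormalCDF ((Real.log (x / K) + (b' + σ ^ 2 / 2) * (T - t)) / (σ * Real.sqrt (T - t))) -
      K * Real.exp (-r * (T - t)) *
        stdNormalCDF ((Real.log (x / K) + (b' + σ ^ 2 / 2) * (T - t)) / (σ * Real.sqrt (T - t)) -
          σ * Real.sqrt (T - t)))
      ((T - t) * (x * Real.exp ((b - r) * (T - t)) *
        stdNormalCDF ((Real.log (x / K) + (b + σ ^ 2 / 2) * (T - t)) /
          (σ * Real.sqrt (T - t))))) b := by
    intro b
    have hexp : HasDerivAt (fun b' : ℝ => Real.exp ((b' - r) * (T - t)))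
        (Real.exp ((b - r) * (T - t)) * (1 * (T - t))) b :=
      (((hasDerivAt_id b).sub_const r).mul_const (T - t)).exp
    have hD1 : HasDerivAt (fun b' : ℝ =>
        (Real.log (x / K) + (b' + σ ^ 2 / 2) * (T - t)) / (σ * Real.sqrt (T - t)))
        (1 * (T - t) / (σ * Real.sqrt (T - t))) b :=
      ((((hasDerivAt_id b).add_const (σ ^ 2 / 2)).mul_const (T - t)).const_add
        (Real.log (x / K))).div_const (σ * Real.sqrt (T - t))
    have h1 := (hexp.const_mul x).mul ((hasDerivAt_cdf _).comp b hD1)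
    have h2 := ((hasDerivAt_cdf _).comp b
      (hD1.sub_const (σ * Real.sqrt (T - t)))).const_mul (K * Real.exp (-r * (T - t)))
    have htot := h1.sub h2
    have h0 := key_identity_s12 K σ b x (T - t) hK hσ hx hτ0
    have hsplit : Real.exp ((b - r) * (T - t)) =
        Real.exp (b * (T - t)) * Real.exp (-r * (T - t)) := by
      rw [← Real.exp_add]; ring_nf
    have keyb : x * Real.exp ((b - r) * (T - t)) *
        phi ((Real.log (x / K) + (b + σ ^ 2 / 2) * (T - t)) / (σ * Real.sqrt (T - t))) =
        K * Real.exp (-r * (T - t)) *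
          phi ((Real.log (x / K) + (b + σ ^ 2 / 2) * (T - t)) / (σ * Real.sqrt (T - t)) -
            σ * Real.sqrt (T - t)) := by
      rw [hsplit]
      linear_combination Real.exp (-r * (T - t)) * h0
    convert htot using 1
    · rfl
    · rfl
    · rfl
    simp only [Function.comp]
    linear_combination (1 * (T - t) / (σ * Real.sqrt (T - t))) * keyb.symm
  have hmono := monotone_of_deriv_nonneg (fun b => (hderiv b).differentiableAt) (fun b => by
    rw [(hderiv b).deriv]
    exact mul_nonneg hτ0.le (mul_nonneg (mul_nonneg hx.le (Real.exp_pos _).le) (cdf_nonneg _)))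
  have h := hmono (show r - s * σ ≤ r + s * σ by nlinarith)
  simp only at h
  have e1 : Vminus T K σ r s t x = x * Real.exp ((r - s * σ - r) * (T - t)) *
      stdNormalCDF ((Real.log (x / K) + (r - s * σ + σ ^ 2 / 2) * (T - t)) /
        (σ * Real.sqrt (T - t))) -
      K * Real.exp (-r * (T - t)) *
        stdNormalCDF ((Real.log (x / K) + (r - s * σ + σ ^ 2 / 2) * (T - t)) /
          (σ * Real.sqrt (T - t)) - σ * Real.sqrt (T - t)) := by
    simp only [Vminus, d1m]
    rw [show r - s * σ - r = -(s * σ) from by ring]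
  have e2 : Vplus T K σ r s t x = x * Real.exp ((r + s * σ - r) * (T - t)) *
      stdNormalCDF ((Real.log (x / K) + (r + s * σ + σ ^ 2 / 2) * (T - t)) /
        (σ * Real.sqrt (T - t))) -
      K * Real.exp (-r * (T - t)) *
        stdNormalCDF ((Real.log (x / K) + (r + s * σ + σ ^ 2 / 2) * (T - t)) /
          (σ * Real.sqrt (T - t)) - σ * Real.sqrt (T - t)) := by
    simp only [Vplus, d1p]
    rw [show r + s * σ - r = s * σ from by ring]
  rw [e1, e2]
  exact h

/-- `V⁻` solves the bid-price PDE
`V_t + r x V_x + (σ² x²/2) V_xx − s |σ x V_x| − r V = 0` on `(0,T) × (0,∞)`,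
and `V⁻ ≤ V⁺` there. -/
theorem stmt_12 (T K σ r s : ℝ) (hT : 0 < T) (hK : 0 < K) (hσ : 0 < σ) (hs : 0 ≤ s) :
    ∀ t ∈ Set.Ioo (0 : ℝ) T, ∀ x ∈ Set.Ioi (0 : ℝ),
      (deriv (fun τ => Vminus T K σ r s τ x) t +
        r * x * deriv (fun ξ => Vminus T K σ r s t ξ) x +
        σ ^ 2 * x ^ 2 / 2 * deriv (deriv (fun ξ => Vminus T K σ r s t ξ)) x -
        s * |σ * x * deriv (fun ξ => Vminus T K σ r s t ξ) x| -
        r * Vminus T K σ r s t x = 0) ∧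
      Vminus T K σ r s t x ≤ Vplus T K σ r s t x := by
  intro t ht x hx
  obtain ⟨ht0, htT⟩ := ht
  have hx0 : 0 < x := hx
  have hτ0 : (0:ℝ) < T - t := by linarith
  have hq0 : 0 < Real.sqrt (T - t) := Real.sqrt_pos.mpr hτ0
  refine ⟨?_, Vminus_le_Vplus T K σ r s t x hK hσ hs htT hx0⟩
  have e1 := (hasDerivAt_Vminus_t T K σ r s t x hσ htT).deriv
  have e2 := (hasDerivAt_Vminus_x T K σ r s t x hK hσ htT hx0).deriv
  have heq : deriv (fun ξ => Vminus T K σ r s t ξ) =ᶠ[nhds x]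
      (fun ξ => Real.exp (-(s * σ) * (T - t)) * stdNormalCDF (d1m T K σ r s t ξ)) := by
    filter_upwards [IsOpen.mem_nhds isOpen_Ioi hx] with ξ hξ
    exact (hasDerivAt_Vminus_x T K σ r s t ξ hK hσ htT hξ).deriv
  have e3 : deriv (deriv (fun ξ => Vminus T K σ r s t ξ)) x =
      Real.exp (-(s * σ) * (T - t)) *
        (phi (d1m T K σ r s t x) * (1 / x / (σ * Real.sqrt (T - t)))) := by
    rw [Filter.EventuallyEq.deriv_eq heq]
    exact (hasDerivAt_Vx_fun T K σ r s t x hK hσ htT hx0).deriv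
  rw [e1, e2, e3]
  rw [abs_of_nonneg (mul_nonneg (mul_nonneg hσ.le hx0.le)
    (mul_nonneg (Real.exp_pos _).le (cdf_nonneg _)))]
  have hkey := key_m T K σ r s t x hK hσ htT hx0
  simp only [Vminus]
  have hx' : (x:ℝ) ≠ 0 := hx0.ne'
  have hσ' : (σ:ℝ) ≠ 0 := hσ.ne'
  have hq' : Real.sqrt (T - t) ≠ 0 := hq0.ne'
  field_simp
  linear_combination (norm := ring_nf) (2 * s * σ * Real.sqrt (T - t) ^ 2 +
    σ ^ 2 * Real.sqrt (T - t) ^ 2 - 2 * r * Real.sqrt (T - t) ^ 2 + 2 * Real.log (x / K)) * hkey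
end

section
/- Let R(t,x) = f(t)^γ · x^{1−γ}/(1−γ) with f(t) = (1 + (νε−1)e^{−ν(T−t)})/ν and ν = −r(1−γ)/γ − ((1−γ)/γ²)(((μ−r)² + s²σ²)/(2σ²) − s/σ). Then R solves, on (0,T) × (0,∞), the PDE 0 = R_t − (((μ−r)² + s²σ²) R_x²)/(2σ² R_{xx}) + (s R_x |R_x|)/(σ R_{xx}) + r x R_x + (γ/(1−γ)) R_x^{(γ−1)/γ}, with terminal condition R(T,x) = ε^γ x^{1−γ}/(1−γ). -/
open Real

/-- Solution of the risk-averse Merton problem: with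
`f(t) = (1 + (νε − 1)e^{−ν(T−t)})/ν` and
`ν = −r(1−γ)/γ − ((1−γ)/γ²)(((μ−r)² + s²σ²)/(2σ²) − s/σ)`,
the function `R(t,x) = f(t)^γ x^{1−γ}/(1−γ)` solves the reduced HJB PDE
`0 = R_t − ((μ−r)² + s²σ²) R_x²/(2σ² R_xx) + s R_x |R_x|/(σ R_xx) + r x R_x
+ (γ/(1−γ)) R_x^{(γ−1)/γ}` on `(0,T) × (0,∞)`, with `R(T,x) = ε^γ x^{1−γ}/(1−γ)`. -/
theorem stmt_15 (T r μ σ s γ ε ν : ℝ)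
    (hT : 0 < T) (hσ : 0 < σ) (hs : 0 ≤ s) (hγ : 0 < γ) (hγ1 : γ ≠ 1) (hε : 0 < ε)
    (hνdef : ν = -r * (1 - γ) / γ -
      (1 - γ) / γ ^ 2 * (((μ - r) ^ 2 + s ^ 2 * σ ^ 2) / (2 * σ ^ 2) - s / σ))
    (hν : 0 < ν)
    (f : ℝ → ℝ) (hf : ∀ t, f t = (1 + (ν * ε - 1) * Real.exp (-ν * (T - t))) / ν)
    (R : ℝ → ℝ → ℝ) (hR : ∀ t x, R t x = f t ^ γ * x ^ (1 - γ) / (1 - γ)) :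
    (∀ t ∈ Set.Ioo (0 : ℝ) T, ∀ x ∈ Set.Ioi (0 : ℝ),
      0 = deriv (fun τ => R τ x) t -
        ((μ - r) ^ 2 + s ^ 2 * σ ^ 2) * (deriv (fun ξ => R t ξ) x) ^ 2 /
          (2 * σ ^ 2 * deriv (deriv (fun ξ => R t ξ)) x) +
        s * deriv (fun ξ => R t ξ) x * |deriv (fun ξ => R t ξ) x| /
          (σ * deriv (deriv (fun ξ => R t ξ)) x) +
        r * x * deriv (fun ξ => R t ξ) x +
        γ / (1 - γ) * (deriv (fun ξ => R t ξ) x) ^ ((γ - 1) / γ)) ∧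
    (∀ x ∈ Set.Ioi (0 : ℝ), R T x = ε ^ γ * x ^ (1 - γ) / (1 - γ)) := by
  have hγ0 : γ ≠ 0 := hγ.ne'
  have h1γ : (1 : ℝ) - γ ≠ 0 := sub_ne_zero.mpr (fun h => hγ1 h.symm)
  -- positivity of f on (-∞, T]
  have hfpos : ∀ t : ℝ, t ≤ T → 0 < f t := by
    intro t ht
    rw [hf t]
    apply div_pos _ hν
    have he1 : Real.exp (-ν * (T - t)) ≤ 1 := by
      apply Real.exp_le_one_iff.mpr
      nlinarith [hν.le]
    have he0 : 0 < Real.exp (-ν * (T - t)) := Real.exp_pos _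
    nlinarith [mul_pos (mul_pos hν hε) he0]
  constructor
  · rintro t ⟨ht0, htT⟩ x hx
    simp only [Set.mem_Ioi] at hx
    have hc : 0 < f t := hfpos t htT.le
    set c := f t with hcdef
    -- time derivative
    have hfd : HasDerivAt f ((ν * ε - 1) * Real.exp (-ν * (T - t))) t := by
      have h1 : HasDerivAt (fun τ : ℝ => -ν * (T - τ)) ν t := by
        have := ((hasDerivAt_id t).const_sub T).const_mul (-ν)
        simpa using this
      have h2 := h1.exp
      have h3 := (h2.const_mul (ν * ε - 1)).const_add 1
      have h4 := h3.div_const ν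
      have : f = fun τ => (1 + (ν * ε - 1) * Real.exp (-ν * (T - τ))) / ν := funext hf
      rw [this]
      refine h4.congr_deriv ?_
      rw [div_eq_iff hν.ne']
      ring
    set D := (ν * ε - 1) * Real.exp (-ν * (T - t)) with hDdef
    have hD : D = ν * c - 1 := by
      rw [hDdef, hcdef, hf t]
      field_simp
      ring
    have htder : deriv (fun τ => R τ x) t
        = γ * c ^ (γ - 1) * D * x ^ (1 - γ) / (1 - γ) := by
      have h5 : HasDerivAt (fun τ => f τ ^ γ) (γ * c ^ (γ - 1) * D) t := by
        have h := hfd.rpow_const (p := γ) (Or.inl hc.ne')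
        convert h using 1
        ring
      have h6 := (h5.mul_const (x ^ (1 - γ))).div_const (1 - γ)
      have heq : (fun τ => R τ x) = fun τ => f τ ^ γ * x ^ (1 - γ) / (1 - γ) := by
        funext τ; exact hR τ x
      rw [heq, h6.deriv]
    -- space derivative (first order), valid for all ξ > 0
    have hsder : ∀ ξ : ℝ, 0 < ξ →
        HasDerivAt (fun ξ => R t ξ) (c ^ γ * ξ ^ (-γ)) ξ := by
      intro ξ hξ
      have hp : HasDerivAt (fun ξ : ℝ => ξ ^ (1 - γ)) ((1 - γ) * ξ ^ (-γ)) ξ := by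
        have := Real.hasDerivAt_rpow_const (x := ξ) (p := 1 - γ) (Or.inl hξ.ne')
        convert this using 2
        ring
      have := (hp.const_mul (c ^ γ)).div_const (1 - γ)
      have heq : (fun ξ => R t ξ) = fun ξ => c ^ γ * ξ ^ (1 - γ) / (1 - γ) := by
        funext ξ; exact hR t ξ
      rw [heq]
      refine this.congr_deriv ?_
      rw [div_eq_iff h1γ]
      ring
    have hd1 : deriv (fun ξ => R t ξ) x = c ^ γ * x ^ (-γ) := (hsder x hx).deriv
    -- second derivative
    have hd2 : deriv (deriv (fun ξ => R t ξ)) x = c ^ γ * (-γ * x ^ (-γ - 1)) := by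
      have hev : deriv (fun ξ => R t ξ) =ᶠ[nhds x] fun ξ => c ^ γ * ξ ^ (-γ) := by
        filter_upwards [Ioi_mem_nhds hx] with ξ hξ
        exact (hsder ξ hξ).deriv
      rw [hev.deriv_eq]
      have hp : HasDerivAt (fun ξ : ℝ => ξ ^ (-γ)) (-γ * x ^ (-γ - 1)) x :=
        Real.hasDerivAt_rpow_const (Or.inl hx.ne')
      exact (hp.const_mul (c ^ γ)).deriv
    rw [htder, hd1, hd2]
    -- positivity facts
    have hPx : 0 < c ^ γ * x ^ (-γ) :=
      mul_pos (Real.rpow_pos_of_pos hc γ) (Real.rpow_pos_of_pos hx _)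
    rw [abs_of_pos hPx]
    -- the fractional power term
    have hpow : (c ^ γ * x ^ (-γ)) ^ ((γ - 1) / γ) = c ^ (γ - 1) * x ^ (1 - γ) := by
      rw [Real.mul_rpow (Real.rpow_pos_of_pos hc γ).le (Real.rpow_pos_of_pos hx _).le,
        ← Real.rpow_mul hc.le, ← Real.rpow_mul hx.le]
      rw [show γ * ((γ - 1) / γ) = γ - 1 by field_simp,
        show -γ * ((γ - 1) / γ) = 1 - γ by field_simp; ring]
    rw [hpow]
    -- express powers in terms of x^(1-γ) and c^(γ-1)
    have hxg : x ^ (-γ) = x ^ (1 - γ) / x := by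
      rw [eq_div_iff hx.ne']
      rw [← Real.rpow_add_one hx.ne']
      ring_nf
    have hxg2 : x ^ (-γ - 1) = x ^ (1 - γ) / x ^ 2 := by
      rw [eq_div_iff (pow_ne_zero 2 hx.ne')]
      rw [show x ^ 2 = x ^ ((2 : ℕ) : ℝ) by rw [Real.rpow_natCast],
        ← Real.rpow_add hx]
      rw [show -γ - 1 + (2 : ℕ) = 1 - γ by push_cast; ring]
    have hcg : c ^ γ = c ^ (γ - 1) * c := by
      rw [← Real.rpow_add_one hc.ne']
      ring_nf
    rw [hxg, hxg2, hcg, hD]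
    set X := x ^ (1 - γ) with hXdef
    set Q := c ^ (γ - 1) with hQdef
    have hX : 0 < X := Real.rpow_pos_of_pos hx _
    have hQ : 0 < Q := Real.rpow_pos_of_pos hc _
    subst hνdef
    field_simp
    ring
  · intro x hx
    rw [hR T x, hf T]
    simp only [sub_self, mul_zero, Real.exp_zero, mul_one]
    have : (1 + (ν * ε - 1)) / ν = ε := by field_simp; ring
    rw [this]
end
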